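/- Let H = (V, E) be a finite hypergraph with source vertex s, let ě ∈ E, and let w, w' : E → ℝ≥0 be weight functions that agree on every hyperedge except ě, with w'(ě) ≤ w(ě) (a weight decrease). Let d[v] and d'[v] denote the shortest-hyperpath distances from s under w and w', respectively, and let x ∈ ě be a vertex attaining d[x] = min{d[v] : v ∈ ě}. Then d'[x] = d[x], and moreover d'[x] = min{d'[v] : v ∈ ě}. -/

import Mathlib

open scoped ENNReal NNReal

variable {V : Type*}

/-- A hyperpath from `u` to `v` in the hypergraph with hyperedge set `E`:
a nonempty list of hyperedges, the first containing `u`, the last containing `v`,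
with consecutive hyperedges intersecting. -/
def IsHyperpath [DecidableEq V] (E : Finset (Finset V)) (u v : V)
    (L : List (Finset V)) : Prop :=
  (∀ e ∈ L, e ∈ E) ∧ L.Chain' (fun a b => (a ∩ b).Nonempty) ∧
    ∃ h : L ≠ [], u ∈ L.head h ∧ v ∈ L.getLast h

/-- The weight of a hyperpath: the sum of the weights of its hyperedges. -/
def hweight (w : Finset V → ℝ≥0) (L : List (Finset V)) : ℝ≥0 :=
  (L.map w).sum

/-- Shortest-hyperpath distance from the source `s` to `v`: the minimum weight
of a hyperpath from `s` to `v` (`∞` when no hyperpath exists), with the source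
itself at distance `0`. -/
noncomputable def hdist [DecidableEq V] (E : Finset (Finset V))
    (w : Finset V → ℝ≥0) (s v : V) : ℝ≥0∞ :=
  if v = s then 0
  else ⨅ L : {L : List (Finset V) // IsHyperpath E s v L}, (hweight w L.1 : ℝ≥0∞)

section Aux

variable [DecidableEq V]

lemma hdist_le_hweight {E : Finset (Finset V)} {w : Finset V → ℝ≥0} {s v : V}
    {L : List (Finset V)} (hL : IsHyperpath E s v L) :
    hdist E w s v ≤ (hweight w L : ℝ≥0∞) := by
  unfold hdist
  split
  · exact zero_le
  · exact iInf_le (fun L : {L : List (Finset V) // IsHyperpath E s v L} =>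
      (hweight w L.1 : ℝ≥0∞)) ⟨L, hL⟩

lemma hweight_congr {w w' : Finset V → ℝ≥0} {L : List (Finset V)}
    (h : ∀ e ∈ L, w' e = w e) : hweight w' L = hweight w L := by
  unfold hweight
  rw [List.map_congr_left h]

lemma hweight_mono {w w' : Finset V → ℝ≥0} {L : List (Finset V)}
    (h : ∀ e ∈ L, w' e ≤ w e) : hweight w' L ≤ hweight w L := by
  unfold hweight
  induction L with
  | nil => simp
  | cons a t ih =>
    simp only [List.map_cons, List.sum_cons]
    exact add_le_add (h a (by simp)) (ih fun e he => h e (by simp [he]))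

lemma hdist_mono {E : Finset (Finset V)} {w w' : Finset V → ℝ≥0} {s v : V}
    (h : ∀ e ∈ E, w' e ≤ w e) : hdist E w' s v ≤ hdist E w s v := by
  unfold hdist
  split
  · exact le_refl _
  · refine le_iInf fun L => ?_
    refine le_trans (iInf_le _ L) ?_
    exact_mod_cast hweight_mono fun e he => h e (L.2.1 e he)

lemma exists_first_split {α : Type*} {a : α} {L : List α} (h : a ∈ L) :
    ∃ P S, L = P ++ a :: S ∧ a ∉ P := by
  induction L with
  | nil => simp at h
  | cons b t ih =>
    by_cases hb : a = b
    · exact ⟨[], t, by simp [hb], by simp⟩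
    · rcases ih (by simpa [hb] using h) with ⟨P, S, h1, h2⟩
      exact ⟨b :: P, S, by simp [h1], by simp [h2, hb]⟩

lemma hdist_self {E : Finset (Finset V)} {w : Finset V → ℝ≥0} {s : V} :
    hdist E w s s = 0 := by simp [hdist]

/-- Key lemma for old weights: any `w'`-path from `s` to a vertex `v ∈ e₀`
has `w'`-weight at least `hdist E w s x`. -/
lemma key_old {E : Finset (Finset V)} {e₀ : Finset V} (he₀ : e₀ ∈ E)
    {w w' : Finset V → ℝ≥0}
    (hagree : ∀ e ∈ E, e ≠ e₀ → w' e = w e) {s x : V} (hx : x ∈ e₀)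
    (hxmin : ∀ v ∈ e₀, hdist E w s x ≤ hdist E w s v)
    {v : V} (hv : v ∈ e₀) {L : List (Finset V)} (hL : IsHyperpath E s v L) :
    hdist E w s x ≤ (hweight w' L : ℝ≥0∞) := by
  obtain ⟨hmem, hchain, hne, hhead, hlast⟩ := hL
  by_cases hmemL : e₀ ∈ L
  · obtain ⟨P, S, rfl, hP⟩ := exists_first_split hmemL
    rcases eq_or_ne P [] with rfl | hPne
    · -- the first hyperedge is e₀, so s ∈ e₀ and d[x] ≤ d[s] = 0
      simp only [List.nil_append] at hhead
      have hs : s ∈ e₀ := hhead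
      have := hxmin s hs
      rw [hdist_self] at this
      simp only [nonpos_iff_eq_zero] at this
      rw [this]
      exact zero_le
    · -- P is a hyperpath from s to some u ∈ P.getLast ∩ e₀
      have hchainP : P.Chain' (fun a b => (a ∩ b).Nonempty) :=
        hchain.prefix ⟨e₀ :: S, rfl⟩
      have hrel : ((P.getLast hPne) ∩ e₀).Nonempty := by
        unfold List.Chain' at hchain
        rw [List.isChain_append] at hchain
        exact hchain.2.2 _ (by rw [List.getLast?_eq_getLast hPne]; rfl) e₀ rfl
      obtain ⟨u, hu⟩ := hrel
      rw [Finset.mem_inter] at hu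
      have hheadP : s ∈ P.head hPne := by
        have : (P ++ e₀ :: S).head hne = P.head hPne := by
          rw [List.head_append]
          simp [hPne]
        rwa [this] at hhead
      have hPpath : IsHyperpath E s u P :=
        ⟨fun e he => hmem e (by simp [he]), hchainP, hPne, hheadP, hu.1⟩
      calc hdist E w s x ≤ hdist E w s u := hxmin u hu.2
        _ ≤ (hweight w P : ℝ≥0∞) := hdist_le_hweight hPpath
        _ = (hweight w' P : ℝ≥0∞) := by
            rw [hweight_congr (w := w) (w' := w') fun e he => hagree e
              (hmem e (by simp [he])) (fun h => hP (h ▸ he))]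
        _ ≤ (hweight w' (P ++ e₀ :: S) : ℝ≥0∞) := by
            apply ENNReal.coe_le_coe.2
            simp [hweight]
  · have heq : hweight w' L = hweight w L :=
      hweight_congr fun e he => hagree e (hmem e he) (fun h => hmemL (h ▸ he))
    rw [heq]
    exact le_trans (hxmin v hv) (hdist_le_hweight ⟨hmem, hchain, hne, hhead, hlast⟩)

/-- From a path to `v` using `e₀`, truncating at the first occurrence of `e₀`
gives a path to `x ∈ e₀` of no larger weight. -/
lemma key_new {E : Finset (Finset V)} {e₀ : Finset V} (he₀ : e₀ ∈ E)
    {w' : Finset V → ℝ≥0} {s x : V} (hx : x ∈ e₀)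
    {v : V} {L : List (Finset V)} (hL : IsHyperpath E s v L) (hmemL : e₀ ∈ L) :
    ∃ Q, IsHyperpath E s x Q ∧ hweight w' Q ≤ hweight w' L := by
  obtain ⟨hmem, hchain, hne, hhead, hlast⟩ := hL
  obtain ⟨P, S, rfl, hP⟩ := exists_first_split hmemL
  refine ⟨P ++ [e₀], ?_, ?_⟩
  · refine ⟨fun e he => ?_, ?_, ?_, ?_, ?_⟩
    · rcases List.mem_append.1 he with h | h
      · exact hmem e (by simp [h])
      · simp at h; exact h ▸ he₀
    · exact hchain.prefix ⟨S, by simp⟩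
    · simp
    · rcases eq_or_ne P [] with rfl | hPne
      · simpa using hhead
      · have h1 : (P ++ [e₀]).head (by simp) = P.head hPne := by
          rw [List.head_append]; simp [hPne]
        have h2 : (P ++ e₀ :: S).head hne = P.head hPne := by
          rw [List.head_append]; simp [hPne]
        rw [h1]; rw [h2] at hhead; exact hhead
    · rw [List.getLast_concat]; exact hx
  · simp [hweight]

end Aux

/-- Let the weight of the single hyperedge `e₀` decrease
(`w'(e₀) ≤ w(e₀)`, all other hyperedge weights unchanged) and let `x ∈ e₀`
attain the minimum old distance `d[x] = min{d[v] : v ∈ e₀}` from the source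
`s`. Then `d'[x] = d[x]`, and moreover `d'[x] = min{d'[v] : v ∈ e₀}`. -/
theorem min_vertex_unaffected_of_weight_decrease [Fintype V] [DecidableEq V]
    (E : Finset (Finset V)) (hE : ∀ e ∈ E, e.Nonempty)
    (hcover : ∀ x : V, ∃ e ∈ E, x ∈ e)
    (e₀ : Finset V) (he₀ : e₀ ∈ E)
    (w w' : Finset V → ℝ≥0)
    (hagree : ∀ e ∈ E, e ≠ e₀ → w' e = w e)
    (hdec : w' e₀ ≤ w e₀) (s x : V) (hx : x ∈ e₀)
    (hxmin : ∀ v ∈ e₀, hdist E w s x ≤ hdist E w s v) :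
    hdist E w' s x = hdist E w s x ∧
      ∀ v ∈ e₀, hdist E w' s x ≤ hdist E w' s v := by
  have hle : ∀ e ∈ E, w' e ≤ w e := fun e he => by
    by_cases h : e = e₀
    · exact h ▸ hdec
    · exact (hagree e he h).le
  have h1 : hdist E w' s x = hdist E w s x := by
    refine le_antisymm (hdist_mono hle) ?_
    rcases eq_or_ne x s with rfl | hxs
    · rw [hdist_self, hdist_self]
    · conv_rhs => rw [hdist, if_neg hxs]
      exact le_iInf fun L => key_old he₀ hagree hx hxmin hx L.2
  refine ⟨h1, fun v hv => ?_⟩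
  rcases eq_or_ne v s with rfl | hvs
  · have := hxmin v hv
    rw [hdist_self] at this
    simp only [nonpos_iff_eq_zero] at this
    rw [hdist_self, h1, this]
  · conv_rhs => rw [hdist, if_neg hvs]
    refine le_iInf fun L => ?_
    by_cases hmemL : e₀ ∈ L.1
    · obtain ⟨Q, hQ, hQle⟩ := key_new (w' := w') he₀ hx L.2 hmemL
      exact le_trans (hdist_le_hweight hQ) (by exact_mod_cast hQle)
    · obtain ⟨hmem, hchain, hne, hhead, hlast⟩ := L.2
      have heq : hweight w' L.1 = hweight w L.1 :=
        hweight_congr fun e he => hagree e (hmem e he) (fun h => hmemL (h ▸ he))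
      rw [h1, heq]
      exact le_trans (hxmin v hv)
        (hdist_le_hweight ⟨hmem, hchain, hne, hhead, hlast⟩)
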